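/- Let $c_1', c_2', b$ be integers with $c_1' \ge 0$, $c_2' \ge 0$, $b \ge c_1' + 1$. Define real functions $f(\beta) = -\beta^2 + (2b - c_1')\beta + 2bc_1' - ((c_1')^2 - c_2')$ and $g(\beta) = f(\beta) - 2\beta - 2c_1'$. Then there exists a positive integer $\beta_0$ with $g(\beta_0) < 0 < f(\beta_0)$. -/
import Mathlib


/-- Prop 3.12: with `f(β) = -β² + (2b-c₁')β + 2bc₁' - (c₁'² - c₂')`
and `g(β) = f(β) - 2β - 2c₁'`, there is a positive integer `β₀` with
`g(β₀) < 0 < f(β₀)`. -/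
theorem stmt11 (c1' c2' b : ℤ) (h1 : 0 ≤ c1') (h2 : 0 ≤ c2') (hb : c1' + 1 ≤ b)
    (f g : ℝ → ℝ)
    (hf : ∀ β, f β = -β ^ 2 + (2 * b - c1') * β + 2 * b * c1' - ((c1' : ℝ) ^ 2 - c2'))
    (hg : ∀ β, g β = f β - 2 * β - 2 * c1') :
    ∃ β₀ : ℤ, 0 < β₀ ∧ g β₀ < 0 ∧ 0 < f β₀ := by
  have h1' : (0:ℝ) ≤ (c1' : ℝ) := by exact_mod_cast h1
  have h2' : (0:ℝ) ≤ (c2' : ℝ) := by exact_mod_cast h2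
  have hb' : (c1' : ℝ) + 1 ≤ (b : ℝ) := by exact_mod_cast hb
  set A : ℝ := 2 * b - c1' - 2 with hA
  set C : ℝ := 2 * b * c1' - c1' ^ 2 + c2' - 2 * c1' with hC
  have hAge : (c1' : ℝ) ≤ A := by simp only [hA]; linarith
  have hCnn : 0 ≤ C := by nlinarith
  have hD : 0 ≤ A ^ 2 + 4 * C := by nlinarith [sq_nonneg A]
  set s : ℝ := Real.sqrt (A ^ 2 + 4 * C) with hsdef
  have hs0 : 0 ≤ s := Real.sqrt_nonneg _
  have hs : s ^ 2 = A ^ 2 + 4 * C := Real.sq_sqrt hD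
  set y0 : ℝ := (A + s) / 2 with hy0def
  have hy0 : 0 ≤ y0 := by
    have : -A ≤ s := by nlinarith
    simp only [hy0def]; linarith
  have hroot : -y0 ^ 2 + A * y0 + C = 0 := by
    have hs' : s ^ 2 = (2 * (b:ℝ) - c1' - 2) ^ 2 + 4 * (2 * b * c1' - c1' ^ 2 + c2' - 2 * c1') := by
      rw [hs, hA, hC]
    simp only [hy0def, hA, hC]
    field_simp
    linarith [hs']
  refine ⟨⌊y0⌋ + 1, ?_, ?_, ?_⟩
  · have : y0 < ((⌊y0⌋ : ℝ) + 1) := Int.lt_floor_add_one y0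
    have : (0:ℝ) < ((⌊y0⌋ : ℝ) + 1) := lt_of_le_of_lt hy0 this
    exact_mod_cast this
  · have hx : y0 < ((⌊y0⌋ + 1 : ℤ) : ℝ) := by push_cast; exact Int.lt_floor_add_one y0
    set x : ℝ := ((⌊y0⌋ + 1 : ℤ) : ℝ)
    rw [hg, hf]
    have hg2 : f x - 2 * x - 2 * c1' = -x ^ 2 + A * x + C := by
      rw [hf]; simp only [hA, hC]; ring
    have h2y : A ≤ 2 * y0 := by simp only [hy0def]; linarith
    nlinarith [mul_pos (sub_pos.mpr hx) (show (0:ℝ) < x + y0 - A by nlinarith)]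
  · have hx : y0 < ((⌊y0⌋ + 1 : ℤ) : ℝ) := by push_cast; exact Int.lt_floor_add_one y0
    have hx1 : ((⌊y0⌋ + 1 : ℤ) : ℝ) ≤ y0 + 1 := by
      push_cast; linarith [Int.floor_le y0]
    set x : ℝ := ((⌊y0⌋ + 1 : ℤ) : ℝ)
    rw [hf]
    have ht1 : 0 < x - y0 := sub_pos.mpr hx
    have ht2 : x - y0 ≤ 1 := by linarith
    nlinarith [mul_pos ht1 (show (0:ℝ) < A + 2 - (x - y0) by linarith),
      mul_nonneg hy0 (show (0:ℝ) ≤ 1 - (x - y0) by linarith)]
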